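/- The extraspecial group of order p^3 and exponent p, for an odd prime p, has dense CD-subgroups. -/

import Mathlib

open Pointwise

/-- Chermak–Delgado measure of a subgroup. -/
noncomputable def mCD (G : Type*) [Group G] (H : Subgroup G) : ℕ :=
  Nat.card H * Nat.card (Subgroup.centralizer (H : Set G))

/-- Maximal Chermak–Delgado measure. -/
noncomputable def mStar (G : Type*) [Group G] : ℕ :=
  sSup (Set.range (mCD G))

/-- Chermak–Delgado lattice (as a set of subgroups). -/
def CD (G : Type*) [Group G] : Set (Subgroup G) :=
  {H | mCD G H = mStar G}

/-- A group has dense CD-subgroups if for all subgroups H < K with H not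
maximal in K, there exists X in CD(G) with H < X < K. -/
def DenseCD (G : Type*) [Group G] : Prop :=
  ∀ H K : Subgroup G, H < K → (∃ L : Subgroup G, H < L ∧ L < K) →
    ∃ X ∈ CD G, H < X ∧ X < K

section Aux

variable {G : Type*} [Group G] [Finite G]

lemma aux_eq_of_le_of_card_le {H K : Subgroup G} (h : H ≤ K)
    (hc : Nat.card K ≤ Nat.card H) : H = K := by
  apply SetLike.coe_injective
  apply Set.eq_of_subset_of_ncard_le h _ (Set.toFinite _)
  rw [← Nat.card_coe_set_eq, ← Nat.card_coe_set_eq]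
  exact hc

lemma aux_card_lt_of_lt {H K : Subgroup G} (h : H < K) :
    Nat.card H < Nat.card K := by
  have hle : Nat.card H ≤ Nat.card K :=
    Nat.le_of_dvd Nat.card_pos (Subgroup.card_dvd_of_le h.le)
  rcases hle.lt_or_eq with h' | h'
  · exact h'
  · exact absurd (aux_eq_of_le_of_card_le h.le h'.ge) h.ne

end Aux

theorem stmt17 (G : Type*) [Group G] [Finite G] (p : ℕ) (hp : p.Prime) (hodd : Odd p)
    (hcard : Nat.card G = p ^ 3) (hna : ¬ ∀ a b : G, a * b = b * a)
    (hexp : Monoid.exponent G = p) :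
    DenseCD G := by
  haveI : Fact p.Prime := ⟨hp⟩
  have hp1 : 1 < p := hp.one_lt
  have hGnt : Nontrivial G := by
    rw [← Finite.one_lt_card_iff_nontrivial, hcard]
    exact Nat.one_lt_pow (by norm_num) hp1
  have hpg : IsPGroup p G := IsPGroup.of_card hcard
  have hexists : ∀ S : Subgroup G, ∃ i ≤ 3, Nat.card S = p ^ i := by
    intro S
    have h1 : Nat.card S ∣ p ^ 3 := hcard ▸ Subgroup.card_subgroup_dvd_card S
    obtain ⟨i, hi, h⟩ := (Nat.dvd_prime_pow hp).mp h1
    exact ⟨i, hi, h⟩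
  -- the center has order p
  have hZcard : Nat.card (Subgroup.center G) = p := by
    obtain ⟨i, hi3, hi⟩ := hexists (Subgroup.center G)
    have h0 : i ≠ 0 := by
      rintro rfl
      have hnt : Nontrivial (Subgroup.center G) := hpg.center_nontrivial
      rw [pow_zero] at hi
      exact (Finite.one_lt_card_iff_nontrivial.mpr hnt).ne' hi
    have h3 : i ≠ 3 := by
      rintro rfl
      have htop : Subgroup.center G = ⊤ :=
        Subgroup.eq_top_of_card_eq _ (by rw [hi, hcard])
      refine hna fun a b => ?_
      have hb : b ∈ Subgroup.center G := htop ▸ Subgroup.mem_top b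
      exact Subgroup.mem_center_iff.mp hb a
    have h2 : i ≠ 2 := by
      rintro rfl
      have hq : Nat.card (G ⧸ Subgroup.center G) = p := by
        have hm := Subgroup.card_eq_card_quotient_mul_card_subgroup (Subgroup.center G)
        rw [hcard, hi] at hm
        have hmm : Nat.card (G ⧸ Subgroup.center G) * p ^ 2 = p * p ^ 2 := by
          rw [← hm]; ring
        exact Nat.eq_of_mul_eq_mul_right (by positivity) hmm
      haveI : IsCyclic (G ⧸ Subgroup.center G) := isCyclic_of_prime_card hq
      exact hna (commutative_of_cyclic_center_quotient (QuotientGroup.mk' _)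
        (QuotientGroup.ker_mk' _).le)
    have hone : i = 1 := by omega
    rw [hone, pow_one] at hi
    exact hi
  -- order p^2 subgroups are self-centralizing
  have hM : ∀ M : Subgroup G, Nat.card M = p ^ 2 →
      Subgroup.centralizer (M : Set G) = M := by
    intro M hMc
    have hcomm : IsMulCommutative M :=
      ⟨⟨IsPGroup.commutative_of_card_eq_prime_sq hMc⟩⟩
    have hle : M ≤ Subgroup.centralizer (M : Set G) := Subgroup.le_centralizer M
    obtain ⟨i, hi3, hiC⟩ := hexists (Subgroup.centralizer (M : Set G))
    have hdvd2 : p ^ 2 ∣ Nat.card (Subgroup.centralizer (M : Set G)) :=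
      hMc ▸ Subgroup.card_dvd_of_le hle
    have hi2 : 2 ≤ i := by
      by_contra hcon
      push_neg at hcon
      have hle2 := Nat.le_of_dvd Nat.card_pos hdvd2
      rw [hiC] at hle2
      have := (Nat.pow_lt_pow_iff_right hp1).mpr (show i < 2 by omega)
      omega
    have hi3' : i ≠ 3 := by
      rintro rfl
      have hCtop : Subgroup.centralizer (M : Set G) = ⊤ :=
        Subgroup.eq_top_of_card_eq _ (by rw [hiC, hcard])
      have hsub : (M : Set G) ⊆ Subgroup.center G :=
        Subgroup.centralizer_eq_top_iff_subset.mp hCtop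
      have hle3 : M ≤ Subgroup.center G := hsub
      have hd : Nat.card M ∣ Nat.card (Subgroup.center G) :=
        Subgroup.card_dvd_of_le hle3
      rw [hMc, hZcard] at hd
      have := Nat.le_of_dvd hp.pos hd
      nlinarith
    have hi2' : i = 2 := by omega
    rw [hi2'] at hiC
    exact (aux_eq_of_le_of_card_le hle (by rw [hiC, hMc])).symm
  have hZleM : ∀ M : Subgroup G, Nat.card M = p ^ 2 → Subgroup.center G ≤ M := by
    intro M h
    rw [← hM M h]
    exact Subgroup.center_le_centralizer _
  -- mCD values
  have hmCDtop : mCD G ⊤ = p ^ 4 := by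
    rw [mCD, Subgroup.coe_top, Subgroup.centralizer_univ, Subgroup.card_top, hcard, hZcard]
    ring
  have hmCDZ : mCD G (Subgroup.center G) = p ^ 4 := by
    have hct : Subgroup.centralizer ((Subgroup.center G : Subgroup G) : Set G) = ⊤ :=
      Subgroup.centralizer_eq_top_iff_subset.mpr fun x hx => hx
    rw [mCD, hct, Subgroup.card_top, hcard, hZcard]
    ring
  have hmCDM : ∀ M : Subgroup G, Nat.card M = p ^ 2 → mCD G M = p ^ 4 := by
    intro M h
    rw [mCD, hM M h, h]
    ring
  have hbound : ∀ S : Subgroup G, mCD G S ≤ p ^ 4 := by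
    intro S
    have hCle : Nat.card (Subgroup.centralizer (S : Set G)) ≤ p ^ 3 := by
      refine Nat.le_of_dvd (by positivity) ?_
      exact hcard ▸ Subgroup.card_subgroup_dvd_card _
    obtain ⟨i, hi3, hiS⟩ := hexists S
    interval_cases i
    · rw [mCD, hiS, pow_zero, one_mul]
      calc Nat.card (Subgroup.centralizer (S : Set G)) ≤ p ^ 3 := hCle
        _ ≤ p ^ 4 := Nat.pow_le_pow_right hp.pos (by norm_num)
    · rw [mCD, hiS, pow_one]
      calc p * Nat.card (Subgroup.centralizer (S : Set G)) ≤ p * p ^ 3 :=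
            Nat.mul_le_mul_left p hCle
        _ = p ^ 4 := by ring
    · exact (hmCDM S hiS).le
    · have : S = ⊤ := Subgroup.eq_top_of_card_eq _ (by rw [hiS, hcard])
      rw [this, hmCDtop]
  have hstar : mStar G = p ^ 4 := by
    refine le_antisymm ?_ ?_
    · refine csSup_le (Set.range_nonempty _) ?_
      rintro x ⟨S, rfl⟩
      exact hbound S
    · exact le_csSup ⟨p ^ 4, by rintro x ⟨S, rfl⟩; exact hbound S⟩ ⟨⊤, hmCDtop⟩
  -- main argument
  intro H K hHK hLex
  obtain ⟨L, hHL, hLK⟩ := hLex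
  obtain ⟨a, ha3, haH⟩ := hexists H
  obtain ⟨b, hb3, hbL⟩ := hexists L
  obtain ⟨c, hc3, hcK⟩ := hexists K
  have h1 : Nat.card H < Nat.card L := aux_card_lt_of_lt hHL
  have h2 : Nat.card L < Nat.card K := aux_card_lt_of_lt hLK
  rw [haH, hbL] at h1
  rw [hbL, hcK] at h2
  have hab : a < b := (Nat.pow_lt_pow_iff_right hp1).mp h1
  have hbc : b < c := (Nat.pow_lt_pow_iff_right hp1).mp h2
  by_cases ha : a = 0
  · -- H is trivial; use the center
    refine ⟨Subgroup.center G, hmCDZ.trans hstar.symm, ?_, ?_⟩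
    · have hHbot : H = ⊥ := by
        rw [← Subgroup.card_eq_one, haH, ha, pow_zero]
      rw [hHbot, bot_lt_iff_ne_bot]
      intro hc
      rw [hc, Subgroup.card_bot] at hZcard
      omega
    · have hc23 : c = 2 ∨ c = 3 := by omega
      rcases hc23 with hc2 | hc3'
    
      · refine lt_of_le_of_ne (hZleM K (by rw [hcK, hc2])) ?_
        intro he
        rw [he] at hZcard
        rw [hcK, hc2] at hZcard
        nlinarith
      · have hKtop : K = ⊤ := Subgroup.eq_top_of_card_eq _ (by rw [hcK, hc3', hcard])
        rw [hKtop, lt_top_iff_ne_top]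
        intro he
        rw [he, Subgroup.card_top, hcard] at hZcard
        have h31 : p ^ 3 ≤ p ^ 1 := by rw [hZcard, pow_one]
        have := (Nat.pow_le_pow_iff_right hp1).mp h31
        omega
  · -- H is nontrivial, so L has order p^2
    have hb2 : b = 2 := by omega
    exact ⟨L, (hmCDM L (by rw [hbL, hb2])).trans hstar.symm, hHL, hLK⟩
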